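/- arXiv:math/9311209 — 2 statements merged into one kernel-verified Lean document; each statement's English description precedes it below -/
import Mathlib

section
/- Let f be continuous on ℝ with convergent integral ∫_{-∞}^∞ f(x)dx, and suppose the bilateral series ∑_{n=-∞}^∞ f(x+n) converges uniformly for x ∈ [0,1]. Then ∫_{-∞}^∞ f(x) dx = ∫_0^1 ∑_{n=-∞}^∞ f(x+n) dx. -/
open MeasureTheory Filter

set_option maxHeartbeats 1000000

/-- If `f` is continuous and integrable on `ℝ`, and the bilateral series of integer
translates `∑_{n=-∞}^∞ f(x+n)` converges uniformly on `[0,1]`, then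
`∫_{-∞}^∞ f = ∫_0^1 ∑_{n=-∞}^∞ f(x+n) dx`. -/
theorem integral_eq_integral_bilateral_tsum_translates (f : ℝ → ℂ)
    (hc : Continuous f) (hi : Integrable f)
    (hu : TendstoUniformlyOn (fun (s : Finset ℤ) x => ∑ n ∈ s, f (x + n))
      (fun x => ∑' n : ℤ, f (x + n)) atTop (Set.Icc 0 1)) :
    ∫ x, f x = ∫ x in (0:ℝ)..1, ∑' n : ℤ, f (x + n) := by
  set g : ℝ → ℂ := fun x => ∑' n : ℤ, f (x + n) with hg
  have hgc : ContinuousOn g (Set.Icc 0 1) :=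
    hu.continuousOn (Eventually.of_forall fun s =>
      (continuous_finset_sum s fun n _ =>
        hc.comp (continuous_id.add continuous_const)).continuousOn).frequently
  have hgi : IntervalIntegrable g volume 0 1 := by
    apply ContinuousOn.intervalIntegrable
    rwa [Set.uIcc_of_le (zero_le_one' ℝ)]
  have hint : ∀ n : ℤ, IntervalIntegrable (fun x => f (x + n)) volume 0 1 :=
    fun n => (hc.comp (continuous_id.add continuous_const)).intervalIntegrable 0 1
  have hpartial : ∀ s : Finset ℤ, IntervalIntegrable (fun x => ∑ n ∈ s, f (x + n)) volume 0 1 :=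
    fun s => by
      have := IntervalIntegrable.sum s (fun n _ => hint n)
      rwa [show (∑ i ∈ s, fun x => f (x + (i:ℝ))) = fun x => ∑ n ∈ s, f (x + n) from
        funext fun x => by simp] at this
  -- partial sums' integrals tend to ∫ f
  have heq : ∀ s : Finset ℤ, (∫ x in (0:ℝ)..1, ∑ n ∈ s, f (x + n)) =
      ∑ n ∈ s, ∫ x in (0:ℝ)..1, f (x + n) := fun s =>
    intervalIntegral.integral_finset_sum (fun n _ => hint n)
  have h1 : Tendsto (fun s : Finset ℤ => ∫ x in (0:ℝ)..1, ∑ n ∈ s, f (x + n)) atTop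
      (nhds (∫ x, f x)) := by
    simp only [heq]
    exact hi.hasSum_intervalIntegral_comp_add_int
  -- partial sums' integrals tend to ∫₀¹ g
  have h2 : Tendsto (fun s : Finset ℤ => ∫ x in (0:ℝ)..1, ∑ n ∈ s, f (x + n)) atTop
      (nhds (∫ x in (0:ℝ)..1, g x)) := by
    rw [Metric.tendsto_nhds]
    intro ε hε
    filter_upwards [Metric.tendstoUniformlyOn_iff.1 hu (ε / 2) (by linarith)] with s hs
    have hbound : ∀ x ∈ Set.uIoc (0:ℝ) 1, ‖(∑ n ∈ s, f (x + n)) - g x‖ ≤ ε / 2 := by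
      intro x hx
      rw [Set.uIoc_of_le (zero_le_one' ℝ)] at hx
      have := hs x ⟨le_of_lt hx.1, hx.2⟩
      rw [dist_eq_norm] at this
      rw [← norm_neg]
      simpa [neg_sub] using this.le
    have key : ‖(∫ x in (0:ℝ)..1, ∑ n ∈ s, f (x + n)) - ∫ x in (0:ℝ)..1, g x‖ ≤ ε / 2 := by
      rw [← intervalIntegral.integral_sub (hpartial s) hgi]
      calc ‖∫ x in (0:ℝ)..1, ((∑ n ∈ s, f (x + n)) - g x)‖
          ≤ (ε / 2) * |1 - 0| :=
            intervalIntegral.norm_integral_le_of_norm_le_const hbound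
        _ = ε / 2 := by norm_num
    rw [dist_eq_norm]
    linarith
  exact tendsto_nhds_unique h1 h2
end

section
/- (q-Gauss sum) For 0 < |q| < 1 and |c/(ab)| < 1, ∑_{n=0}^∞ (a;q)_n (b;q)_n / ((q;q)_n (c;q)_n) · (c/(ab))^n = (c/a, c/b; q)_∞ / (c, c/(ab); q)_∞. -/
/-- The infinite q-Pochhammer symbol `(a;q)_∞ = ∏_{n=0}^∞ (1 - a qⁿ)`. -/
noncomputable def qp (a q : ℂ) : ℂ := ∏' n : ℕ, (1 - a * q ^ n)

noncomputable def Complex.abs : AbsoluteValue ℂ ℝ :=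
  IsAbsoluteValue.toAbsoluteValue (norm : ℂ → ℝ)

lemma Complex.norm_eq_abs (z : ℂ) : ‖z‖ = Complex.abs z := rfl

open Finset Filter Topology

namespace QG

noncomputable def pp (x q : ℂ) (n : ℕ) : ℂ := ∏ k ∈ Finset.range n, (1 - x * q ^ k)

noncomputable def T (q a b x : ℂ) (n : ℕ) : ℂ :=
  pp a q n * pp b q n / (pp q q n * pp x q n) * (x / (a * b)) ^ n



lemma pp_succ (x q : ℂ) (n : ℕ) : pp x q (n + 1) = pp x q n * (1 - x * q ^ n) :=
  Finset.prod_range_succ _ _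

lemma pp_succ' (x q : ℂ) (n : ℕ) : pp x q (n + 1) = (1 - x) * pp (x * q) q n := by
  rw [pp, Finset.prod_range_succ', pp]
  simp only [pow_zero, mul_one]
  rw [mul_comm]
  congr 1
  exact Finset.prod_congr rfl fun k _ => by ring

lemma pp_ne_zero {x q : ℂ} (hx : ∀ k : ℕ, x * q ^ k ≠ 1) (n : ℕ) : pp x q n ≠ 0 := by
  refine Finset.prod_ne_zero_iff.2 fun k _ => sub_ne_zero.2 fun h => hx k h.symm

lemma abs_pp (x q : ℂ) (n : ℕ) :
    Complex.abs (pp x q n) = ∏ k ∈ Finset.range n, Complex.abs (1 - x * q ^ k) :=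
  map_prod _ _ _

/-- geometric partial sum bound -/
lemma geo_sum_le {r : ℝ} (h0 : 0 ≤ r) (h1 : r < 1) (n : ℕ) :
    ∑ k ∈ Finset.range n, r ^ k ≤ (1 - r)⁻¹ := by
  have hs : Summable fun k : ℕ => r ^ k := summable_geometric_of_lt_one h0 h1
  calc ∑ k ∈ Finset.range n, r ^ k ≤ ∑' k : ℕ, r ^ k :=
        Summable.sum_le_tsum _ (fun i _ => pow_nonneg h0 i) hs
    _ = (1 - r)⁻¹ := tsum_geometric_of_lt_one h0 h1

/-- upper bound for partial q-Pochhammer products -/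
lemma pp_abs_le {q : ℂ} (hq1 : Complex.abs q < 1) (x : ℂ) (n : ℕ) :
    Complex.abs (pp x q n) ≤ Real.exp (Complex.abs x * (1 - Complex.abs q)⁻¹) := by
  have hq0 : (0:ℝ) ≤ Complex.abs q := Complex.abs.nonneg q
  rw [abs_pp]
  calc (∏ k ∈ Finset.range n, Complex.abs (1 - x * q ^ k))
      ≤ ∏ k ∈ Finset.range n, Real.exp (Complex.abs x * Complex.abs q ^ k) := by
        refine Finset.prod_le_prod (fun k _ => Complex.abs.nonneg _) fun k _ => ?_
        have h1 : Complex.abs (1 - x * q ^ k) ≤ 1 + Complex.abs x * Complex.abs q ^ k := by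
          calc Complex.abs (1 - x * q ^ k) ≤ Complex.abs 1 + Complex.abs (x * q ^ k) :=
              Complex.abs.sub_le_add _ _
            _ = 1 + Complex.abs x * Complex.abs q ^ k := by
              simp [map_mul, map_pow]
        exact h1.trans (by linarith [Real.add_one_le_exp (Complex.abs x * Complex.abs q ^ k)])
    _ = Real.exp (∑ k ∈ Finset.range n, Complex.abs x * Complex.abs q ^ k) :=
        (Real.exp_sum _ _).symm
    _ ≤ Real.exp (Complex.abs x * (1 - Complex.abs q)⁻¹) := by
        apply Real.exp_le_exp.2
        rw [← Finset.mul_sum]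
        have := geo_sum_le hq0 hq1 n
        have hx0 : (0:ℝ) ≤ Complex.abs x := Complex.abs.nonneg x
        nlinarith [geo_sum_le hq0 hq1 n]

/-- product lower bound `∏ (1 - u k) ≥ 1 - ∑ u k` -/
lemma prod_one_sub_ge {u : ℕ → ℝ} (h0 : ∀ k, 0 ≤ u k) (h1 : ∀ k, u k ≤ 1) (n : ℕ) :
    1 - ∑ k ∈ Finset.range n, u k ≤ ∏ k ∈ Finset.range n, (1 - u k) := by
  induction n with
  | zero => simp
  | succ n ih =>
    rw [Finset.prod_range_succ, Finset.sum_range_succ]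
    have h2 : (0:ℝ) ≤ ∑ k ∈ Finset.range n, u k := Finset.sum_nonneg fun k _ => h0 k
    nlinarith [h0 n, h1 n, ih]

/-- lower bound 1/2 for small x -/
lemma pp_abs_half {q : ℂ} (hq1 : Complex.abs q < 1) {x : ℂ}
    (hx : Complex.abs x * (1 - Complex.abs q)⁻¹ ≤ 1 / 2) (n : ℕ) :
    (1:ℝ) / 2 ≤ Complex.abs (pp x q n) := by
  have hq0 : (0:ℝ) ≤ Complex.abs q := Complex.abs.nonneg q
  have hx0 : (0:ℝ) ≤ Complex.abs x := Complex.abs.nonneg x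
  have h01 : (0:ℝ) < 1 - Complex.abs q := by linarith
  have hden : (0:ℝ) < (1 - Complex.abs q)⁻¹ := inv_pos.2 h01
  have hinv : (1 - Complex.abs q) * (1 - Complex.abs q)⁻¹ = 1 := mul_inv_cancel₀ (ne_of_gt h01)
  have hxhalf : Complex.abs x ≤ 1 / 2 := by
    nlinarith [mul_le_mul_of_nonneg_right hx h01.le, hinv]
  rw [abs_pp]
  have key : ∀ k ∈ Finset.range n, (1 : ℝ) - Complex.abs x * Complex.abs q ^ k ≤
      Complex.abs (1 - x * q ^ k) := by
    intro k _
    have : Complex.abs (x * q ^ k) = Complex.abs x * Complex.abs q ^ k := by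
      simp [map_mul, map_pow]
    calc (1:ℝ) - Complex.abs x * Complex.abs q ^ k = Complex.abs 1 - Complex.abs (x * q ^ k) := by
          rw [this]; simp
      _ ≤ Complex.abs (1 - x * q ^ k) := by
          have h := norm_sub_norm_le (1:ℂ) (x * q ^ k)
          simp only [Complex.norm_eq_abs] at h
          linarith
  have hu0 : ∀ k : ℕ, 0 ≤ Complex.abs x * Complex.abs q ^ k := fun k => by positivity
  have hu1 : ∀ k : ℕ, Complex.abs x * Complex.abs q ^ k ≤ 1 := fun k => by
    have : Complex.abs q ^ k ≤ 1 := pow_le_one₀ hq0 hq1.le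
    nlinarith
  calc (1:ℝ)/2 ≤ 1 - ∑ k ∈ Finset.range n, Complex.abs x * Complex.abs q ^ k := by
        rw [← Finset.mul_sum]
        nlinarith [geo_sum_le hq0 hq1 n]
    _ ≤ ∏ k ∈ Finset.range n, (1 - Complex.abs x * Complex.abs q ^ k) :=
        prod_one_sub_ge hu0 hu1 n
    _ ≤ ∏ k ∈ Finset.range n, Complex.abs (1 - x * q ^ k) := by
        refine Finset.prod_le_prod (fun k _ => ?_) key
        nlinarith [geo_sum_le hq0 hq1 n, hu0 k, hu1 k]

lemma hasProd_zero_of_eq_zero {f : ℕ → ℂ} {k0 : ℕ} (h : f k0 = 0) : HasProd f 0 := by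
  rw [HasProd]
  apply Tendsto.congr' _ tendsto_const_nhds
  filter_upwards [eventually_ge_atTop ({k0} : Finset ℕ)] with s hs
  exact (Finset.prod_eq_zero (by simpa using hs) h).symm

/-- summability of logarithms of the factors -/
lemma summable_log {q : ℂ} (hq1 : Complex.abs q < 1) {x : ℂ}
    (hne : ∀ n : ℕ, (1 : ℂ) - x * q ^ n ≠ 0) :
    Summable fun n : ℕ => Complex.log (1 - x * q ^ n) := by
  have hq0 : (0:ℝ) ≤ Complex.abs q := Complex.abs.nonneg q
  obtain ⟨K, hK⟩ : ∃ K : ℕ, ∀ n ≥ K, Complex.abs x * Complex.abs q ^ n ≤ 1 / 2 := by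
    have h : Tendsto (fun n : ℕ => Complex.abs x * Complex.abs q ^ n) atTop (𝓝 (Complex.abs x * 0)) :=
      (tendsto_pow_atTop_nhds_zero_of_lt_one hq0 hq1).const_mul _
    rw [mul_zero] at h
    have := h.eventually_le_const (show (0:ℝ) < 1/2 by norm_num)
    exact (eventually_atTop.1 this)
  rw [← summable_nat_add_iff K]
  apply Summable.of_norm
  have hb : Summable fun n : ℕ => (3/2 : ℝ) * (Complex.abs x * Complex.abs q ^ K) * Complex.abs q ^ n :=
    (summable_geometric_of_lt_one hq0 hq1).mul_left _
  refine Summable.of_nonneg_of_le (fun n => norm_nonneg _) (fun n => ?_) hb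
  have h1 : Complex.abs (x * q ^ (n + K)) ≤ 1/2 := by
    rw [map_mul, map_pow]
    calc Complex.abs x * Complex.abs q ^ (n + K) ≤ Complex.abs x * Complex.abs q ^ (K) := by
          apply mul_le_mul_of_nonneg_left _ (Complex.abs.nonneg x)
          exact pow_le_pow_of_le_one hq0 hq1.le (by omega)
      _ ≤ 1/2 := hK K le_rfl
  have h2 : ‖Complex.log (1 + -(x * q ^ (n + K)))‖ ≤ 3/2 * ‖-(x * q ^ (n+K))‖ := by
    apply Complex.norm_log_one_add_half_le_self
    rw [norm_neg]
    simpa [Complex.norm_eq_abs] using h1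
  rw [sub_eq_add_neg]
  calc ‖Complex.log (1 + -(x * q ^ (n + K)))‖ ≤ 3/2 * ‖-(x * q ^ (n+K))‖ := h2
    _ ≤ 3/2 * (Complex.abs x * Complex.abs q ^ K) * Complex.abs q ^ n := by
        rw [norm_neg, Complex.norm_eq_abs, map_mul, map_pow, pow_add]
        ring_nf
        nlinarith [Complex.abs.nonneg x, pow_nonneg hq0 n, pow_nonneg hq0 K,
          pow_le_one₀ hq0 hq1.le (n := n)]

lemma qp_eq_exp {q : ℂ} (hq1 : Complex.abs q < 1) {x : ℂ}
    (hne : ∀ n : ℕ, (1 : ℂ) - x * q ^ n ≠ 0) :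
    HasProd (fun n : ℕ => 1 - x * q ^ n)
      (Complex.exp (∑' n : ℕ, Complex.log (1 - x * q ^ n))) := by
  have hs := (summable_log hq1 hne).hasSum
  have h := hs.cexp
  have hfun : (Complex.exp ∘ fun n : ℕ => Complex.log (1 - x * q ^ n)) =
      fun n : ℕ => 1 - x * q ^ n := funext fun n => by
    simp only [Function.comp_apply]; exact Complex.exp_log (hne n)
  rwa [hfun] at h

lemma qp_hasProd {q : ℂ} (hq1 : Complex.abs q < 1) (x : ℂ) :
    HasProd (fun n : ℕ => 1 - x * q ^ n) (qp x q) := by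
  unfold qp
  by_cases hne : ∀ n : ℕ, (1 : ℂ) - x * q ^ n ≠ 0
  · exact (qp_eq_exp hq1 hne).multipliable.hasProd
  · push_neg at hne
    obtain ⟨k0, hk0⟩ := hne
    exact (hasProd_zero_of_eq_zero hk0).multipliable.hasProd

lemma qp_tendsto {q : ℂ} (hq1 : Complex.abs q < 1) (x : ℂ) :
    Tendsto (fun n => pp x q n) atTop (𝓝 (qp x q)) :=
  (qp_hasProd hq1 x).tendsto_prod_nat

lemma qp_ne_zero {q : ℂ} (hq1 : Complex.abs q < 1) {x : ℂ}
    (hne : ∀ n : ℕ, (1 : ℂ) - x * q ^ n ≠ 0) : qp x q ≠ 0 := by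
  unfold qp
  rw [(qp_eq_exp hq1 hne).tprod_eq]
  exact Complex.exp_ne_zero _

lemma pp_split (x q : ℂ) (K m : ℕ) : pp x q (K + m) = pp x q K * pp (x * q ^ K) q m := by
  rw [pp, Finset.prod_range_add, pp, pp]
  congr 1
  exact Finset.prod_congr rfl fun k _ => by rw [pow_add]; ring

lemma pp_lb {q : ℂ} (hq1 : Complex.abs q < 1) {x : ℂ} (hx : ∀ k : ℕ, x * q ^ k ≠ 1) :
    ∃ δ : ℝ, 0 < δ ∧ ∀ n, δ ≤ Complex.abs (pp x q n) := by
  have hq0 : (0:ℝ) ≤ Complex.abs q := Complex.abs.nonneg q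
  obtain ⟨K, hK⟩ : ∃ K : ℕ, Complex.abs (x * q ^ K) * (1 - Complex.abs q)⁻¹ ≤ 1 / 2 := by
    have h : Tendsto (fun n : ℕ => Complex.abs x * Complex.abs q ^ n * (1 - Complex.abs q)⁻¹)
        atTop (𝓝 (Complex.abs x * 0 * (1 - Complex.abs q)⁻¹)) :=
      (((tendsto_pow_atTop_nhds_zero_of_lt_one hq0 hq1).const_mul _).mul_const _)
    rw [mul_zero, zero_mul] at h
    obtain ⟨K, hK⟩ := eventually_atTop.1 (h.eventually_le_const (show (0:ℝ) < 1/2 by norm_num))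
    exact ⟨K, by simpa [map_mul, map_pow] using hK K le_rfl⟩
  set s : Finset ℝ := (Finset.range (K+1)).image fun n => Complex.abs (pp x q n) with hs
  have hsne : s.Nonempty := ⟨Complex.abs (pp x q 0), Finset.mem_image.2 ⟨0, by simp, rfl⟩⟩
  set δ0 : ℝ := s.min' hsne with hδ0
  have hδ0pos : 0 < δ0 := by
    obtain ⟨n, _, hn⟩ := Finset.mem_image.1 (s.min'_mem hsne)
    rw [hδ0, ← hn]
    exact AbsoluteValue.pos _ (pp_ne_zero hx n)
  refine ⟨δ0 / 2, by linarith, fun n => ?_⟩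
  rcases le_or_gt n K with h | h
  · have : δ0 ≤ Complex.abs (pp x q n) :=
      Finset.min'_le _ _ (Finset.mem_image.2 ⟨n, Finset.mem_range.2 (by omega), rfl⟩)
    linarith
  · obtain ⟨m, rfl⟩ : ∃ m, n = K + m := ⟨n - K, by omega⟩
    rw [pp_split, map_mul]
    have h1 : δ0 ≤ Complex.abs (pp x q K) :=
      Finset.min'_le _ _ (Finset.mem_image.2 ⟨K, Finset.mem_range.2 (by omega), rfl⟩)
    have h2 : (1:ℝ)/2 ≤ Complex.abs (pp (x * q ^ K) q m) := pp_abs_half hq1 hK m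
    calc δ0 / 2 ≤ Complex.abs (pp x q K) * (1/2) := by nlinarith
      _ ≤ Complex.abs (pp x q K) * Complex.abs (pp (x * q ^ K) q m) := by
          apply mul_le_mul_of_nonneg_left h2 (Complex.abs.nonneg _)

lemma T_bound {q a b x : ℂ} (hq1 : Complex.abs q < 1) {δq δx : ℝ}
    (hδq0 : 0 < δq) (hδq : ∀ n, δq ≤ Complex.abs (pp q q n))
    (hδx0 : 0 < δx) (hδx : ∀ n, δx ≤ Complex.abs (pp x q n)) (n : ℕ) :
    Complex.abs (T q a b x n) ≤
      Real.exp (Complex.abs a * (1 - Complex.abs q)⁻¹) *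
        Real.exp (Complex.abs b * (1 - Complex.abs q)⁻¹) / (δq * δx) *
        Complex.abs (x / (a * b)) ^ n := by
  rw [T, map_mul, map_pow, map_div₀, map_mul, map_mul]
  apply mul_le_mul_of_nonneg_right _ (pow_nonneg (Complex.abs.nonneg _) n)
  apply div_le_div₀ (by positivity)
  · exact mul_le_mul (pp_abs_le hq1 a n) (pp_abs_le hq1 b n) (Complex.abs.nonneg _)
      (Real.exp_nonneg _)
  · positivity
  · exact mul_le_mul (hδq n) (hδx n) hδx0.le (Complex.abs.nonneg _)

lemma T_summable_mul {q a b x : ℂ} (hq1 : Complex.abs q < 1) {δq δx : ℝ}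
    (hδq0 : 0 < δq) (hδq : ∀ n, δq ≤ Complex.abs (pp q q n))
    (hδx0 : 0 < δx) (hδx : ∀ n, δx ≤ Complex.abs (pp x q n))
    (hs : Complex.abs (x / (a * b)) < 1)
    (g : ℕ → ℂ) (G : ℝ) (hG : ∀ n, Complex.abs (g n) ≤ G) :
    Summable (fun n => T q a b x n * g n) := by
  set M : ℝ := Real.exp (Complex.abs a * (1 - Complex.abs q)⁻¹) *
    Real.exp (Complex.abs b * (1 - Complex.abs q)⁻¹) / (δq * δx) with hM
  have hM0 : 0 ≤ M := by positivity
  have hG0 : 0 ≤ G := le_trans (Complex.abs.nonneg _) (hG 0)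
  apply Summable.of_norm
  have hgeom : Summable fun n : ℕ => M * G * Complex.abs (x / (a * b)) ^ n :=
    (summable_geometric_of_lt_one (Complex.abs.nonneg _) hs).mul_left _
  refine Summable.of_nonneg_of_le (fun n => norm_nonneg _) (fun n => ?_) hgeom
  rw [Complex.norm_eq_abs, map_mul]
  calc Complex.abs (T q a b x n) * Complex.abs (g n)
      ≤ (M * Complex.abs (x / (a * b)) ^ n) * G := by
        apply mul_le_mul (T_bound hq1 hδq0 hδq hδx0 hδx n) (hG n) (Complex.abs.nonneg _)
        positivity
    _ = M * G * Complex.abs (x / (a * b)) ^ n := by ring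

lemma q_self_ne_one {q : ℂ} (hq1 : Complex.abs q < 1) : ∀ k : ℕ, q * q ^ k ≠ 1 := by
  intro k h
  have : Complex.abs (q * q ^ k) < 1 := by
    rw [map_mul, map_pow]
    calc Complex.abs q * Complex.abs q ^ k ≤ Complex.abs q * 1 :=
          mul_le_mul_of_nonneg_left (pow_le_one₀ (Complex.abs.nonneg q) hq1.le)
            (Complex.abs.nonneg q)
      _ < 1 := by rwa [mul_one]
  rw [h] at this; simp at this

lemma single_lb {q x : ℂ} (hq1 : Complex.abs q < 1) {δ : ℝ}
    (hδ : ∀ n, δ ≤ Complex.abs (pp x q n)) (n : ℕ) :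
    δ / Real.exp (Complex.abs x * (1 - Complex.abs q)⁻¹) ≤ Complex.abs (1 - x * q ^ n) := by
  have h1 : δ ≤ Complex.abs (pp x q n) * Complex.abs (1 - x * q ^ n) := by
    rw [← map_mul, ← pp_succ]; exact hδ (n + 1)
  have h2 : Complex.abs (pp x q n) ≤ Real.exp (Complex.abs x * (1 - Complex.abs q)⁻¹) :=
    pp_abs_le hq1 x n
  have h3 : (0:ℝ) < Real.exp (Complex.abs x * (1 - Complex.abs q)⁻¹) := Real.exp_pos _
  rw [div_le_iff₀ h3]
  nlinarith [Complex.abs.nonneg (1 - x * q ^ n), Complex.abs.nonneg (pp x q n)]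

/-- atomic algebra lemma for (I) -/
lemma alg1 (A Dq Px Pxq Z Q X1 E : ℂ) (hDq : Dq ≠ 0) (hPx : Px ≠ 0) (hPxq : Pxq ≠ 0)
    (hE : E ≠ 0) (key : Px * E = X1 * Pxq) :
    A / (Dq * Pxq) * (Z * Q) = A / (Dq * Px) * Z * (X1 * Q / E) := by
  field_simp
  linear_combination (A * Z * Q) * key

/-- atomic algebra lemma for (II) -/
lemma alg2 (Pa Pb Dq Px Z Zn Ea Eb Eq Ex : ℂ) (hDq : Dq ≠ 0) (hPx : Px ≠ 0)
    (hEq : Eq ≠ 0) (hEx : Ex ≠ 0) :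
    Pa * Pb / (Dq * Px) * Zn * (Z * (Ea * Eb) / Ex) =
      Pa * Ea * (Pb * Eb) / (Dq * Eq * (Px * Ex)) * (Zn * Z) * Eq := by
  field_simp

/-- atomic algebra lemma for (III) -/
lemma alg3 (a b x Qn : ℂ) (ha : a ≠ 0) (hb : b ≠ 0) (hE : 1 - x * Qn ≠ 0) :
    (1 - x) * (1 - x / (a * b)) =
      (1 - x / a) * (1 - x / b) * ((1 - x) * Qn / (1 - x * Qn)) +
        ((1 - x) * (1 - Qn) -
          (1 - x) * (x / (a * b) * ((1 - a * Qn) * (1 - b * Qn)) / (1 - x * Qn))) := by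
  field_simp
  ring

theorem step {q a b : ℂ} (hq1 : Complex.abs q < 1) (ha : a ≠ 0) (hb : b ≠ 0)
    {x : ℂ} (hx : ∀ k : ℕ, x * q ^ k ≠ 1) (hxz : Complex.abs (x / (a * b)) < 1) :
    (1 - x) * (1 - x / (a * b)) * ∑' n, T q a b x n =
      (1 - x / a) * (1 - x / b) * ∑' n, T q a b (x * q) n := by
  obtain ⟨δq, hδq0, hδq⟩ := pp_lb hq1 (q_self_ne_one hq1)
  obtain ⟨δx, hδx0, hδx⟩ := pp_lb hq1 hx
  set Cx : ℝ := Real.exp (Complex.abs x * (1 - Complex.abs q)⁻¹) with hCx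
  have hCx0 : 0 < Cx := Real.exp_pos _
  have hd : ∀ n : ℕ, (1 : ℂ) - x * q ^ n ≠ 0 := fun n => sub_ne_zero.2 fun h => hx n h.symm
  have hxq : ∀ k : ℕ, (x * q) * q ^ k ≠ 1 := fun k h => hx (k + 1) (by rw [← h]; ring)
  have hppx : ∀ n, pp x q n ≠ 0 := pp_ne_zero hx
  have hppq : ∀ n, pp q q n ≠ 0 := pp_ne_zero (q_self_ne_one hq1)
  have hppxq : ∀ n, pp (x * q) q n ≠ 0 := pp_ne_zero hxq
  have hdinv : ∀ n : ℕ, Complex.abs ((1 - x * q ^ n)⁻¹) ≤ Cx / δx := by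
    intro n
    rw [map_inv₀]
    have h2 : 0 < Complex.abs (1 - x * q ^ n) := AbsoluteValue.pos _ (hd n)
    rw [inv_le_comm₀ h2 (by positivity), inv_div]
    exact single_lb hq1 hδx n
  have key : ∀ n : ℕ, pp x q n * (1 - x * q ^ n) = (1 - x) * pp (x * q) q n :=
    fun n => by rw [← pp_succ, pp_succ']
  have hzsplit : ∀ n : ℕ, ((x * q) / (a * b)) ^ n = (x / (a * b)) ^ n * q ^ n := by
    intro n
    rw [← mul_pow]
    congr 1
    field_simp
  -- (I)
  have hI : ∀ n : ℕ, T q a b (x * q) n = T q a b x n * ((1 - x) * q ^ n / (1 - x * q ^ n)) := by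
    intro n
    rw [T, T, hzsplit]
    exact alg1 _ _ _ _ _ _ _ _ (hppq n) (hppx n) (hppxq n) (hd n) (key n)
  -- (II)
  have hII : ∀ n : ℕ, T q a b x n *
      (x / (a * b) * ((1 - a * q ^ n) * (1 - b * q ^ n)) / (1 - x * q ^ n)) =
      T q a b x (n + 1) * (1 - q ^ (n + 1)) := by
    intro n
    rw [T, T, pp_succ a, pp_succ b, pp_succ q, pp_succ x, pow_succ (x / (a * b)),
      show (1 : ℂ) - q ^ (n + 1) = 1 - q * q ^ n by rw [pow_succ]; ring]
    exact alg2 _ _ _ _ _ _ _ _ _ _ (hppq n) (hppx n)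
      (sub_ne_zero.2 fun h => q_self_ne_one hq1 n h.symm) (hd n)
  -- coefficient function
  set coef : ℕ → ℂ := fun n => (1 - x / a) * (1 - x / b) * ((1 - x) * q ^ n / (1 - x * q ^ n))
    with hcoefdef
  -- termwise main identity
  have hmain : ∀ n : ℕ, T q a b x n * ((1 - x) * (1 - x / (a * b))) =
      T q a b x n * coef n +
        ((1 - x) * (T q a b x n * (1 - q ^ n)) -
          (1 - x) * (T q a b x (n + 1) * (1 - q ^ (n + 1)))) := by
    intro n
    rw [← hII n, hcoefdef]
    have h3 := alg3 a b x (q ^ n) ha hb (hd n)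
    calc T q a b x n * ((1 - x) * (1 - x / (a * b)))
        = T q a b x n * ((1 - x / a) * (1 - x / b) * ((1 - x) * q ^ n / (1 - x * q ^ n)) +
          ((1 - x) * (1 - q ^ n) -
            (1 - x) * (x / (a * b) * ((1 - a * q ^ n) * (1 - b * q ^ n)) / (1 - x * q ^ n)))) := by
          rw [← h3]
      _ = _ := by ring
  -- summability facts
  have hcoefbdd : ∀ n : ℕ, Complex.abs (coef n) ≤
      Complex.abs (1 - x / a) * Complex.abs (1 - x / b) * (Complex.abs (1 - x) * (Cx / δx)) := by
    intro n
    have h1 : Complex.abs q ^ n ≤ 1 := pow_le_one₀ (Complex.abs.nonneg q) hq1.le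
    have h2 : (Complex.abs (1 - x * q ^ n))⁻¹ ≤ Cx / δx := by
      rw [← map_inv₀]; exact hdinv n
    have h2' : (0:ℝ) ≤ (Complex.abs (1 - x * q ^ n))⁻¹ := by positivity
    have hX : (0:ℝ) ≤ Complex.abs (1 - x) := Complex.abs.nonneg _
    have e : Complex.abs (coef n) = Complex.abs (1 - x / a) * Complex.abs (1 - x / b) *
        (Complex.abs (1 - x) * Complex.abs q ^ n * (Complex.abs (1 - x * q ^ n))⁻¹) := by
      rw [hcoefdef]
      simp only [map_mul, map_div₀, map_pow]
      ring
    rw [e]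
    apply mul_le_mul_of_nonneg_left _ (by positivity)
    rw [mul_assoc]
    calc Complex.abs (1 - x) * (Complex.abs q ^ n * (Complex.abs (1 - x * q ^ n))⁻¹)
        ≤ Complex.abs (1 - x) * (1 * (Cx / δx)) :=
          mul_le_mul_of_nonneg_left (mul_le_mul h1 h2 h2' one_pos.le) hX
      _ = Complex.abs (1 - x) * (Cx / δx) := by ring
  have S1 : Summable (fun n => T q a b x n * coef n) :=
    T_summable_mul hq1 hδq0 hδq hδx0 hδx hxz coef _ hcoefbdd
  have S2 : Summable (fun n => T q a b x n * (1 - q ^ n)) := by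
    refine T_summable_mul hq1 hδq0 hδq hδx0 hδx hxz _ 2 fun n => ?_
    calc Complex.abs (1 - q ^ n) ≤ Complex.abs 1 + Complex.abs (q ^ n) :=
          Complex.abs.sub_le_add _ _
      _ ≤ 1 + 1 := by
          rw [map_one, map_pow]
          have := pow_le_one₀ (Complex.abs.nonneg q) hq1.le (n := n)
          linarith
      _ = 2 := by norm_num
  have S3 : Summable (fun n => T q a b x (n + 1) * (1 - q ^ (n + 1))) :=
    (summable_nat_add_iff 1).2 S2
  have Scoef : Summable (fun n => T q a b x n * ((1 - x) * (1 - x / (a * b)))) := by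
    refine T_summable_mul hq1 hδq0 hδq hδx0 hδx hxz _ (Complex.abs ((1 - x) * (1 - x / (a * b))))
      fun n => le_rfl
  -- the computation
  have e1 : (1 - x) * (1 - x / (a * b)) * ∑' n, T q a b x n =
      ∑' n, T q a b x n * ((1 - x) * (1 - x / (a * b))) := by
    rw [tsum_mul_right, mul_comm]
  rw [e1]
  have e2 : ∑' n, T q a b x n * ((1 - x) * (1 - x / (a * b))) =
      (∑' n, T q a b x n * coef n) +
        ∑' n, ((1 - x) * (T q a b x n * (1 - q ^ n)) -
          (1 - x) * (T q a b x (n + 1) * (1 - q ^ (n + 1)))) := by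
    rw [← Summable.tsum_add S1 ((S2.mul_left _).sub (S3.mul_left _))]
    exact tsum_congr hmain
  rw [e2]
  have e3 : ∑' n, ((1 - x) * (T q a b x n * (1 - q ^ n)) -
      (1 - x) * (T q a b x (n + 1) * (1 - q ^ (n + 1)))) = 0 := by
    rw [Summable.tsum_sub (S2.mul_left _) (S3.mul_left _), tsum_mul_left, tsum_mul_left]
    rw [Summable.tsum_eq_zero_add S2]
    have h0 : T q a b x 0 * (1 - q ^ 0) = 0 := by simp
    rw [h0, zero_add]
    ring
  rw [e3, add_zero]
  have e4 : ∀ n : ℕ, T q a b x n * coef n = (1 - x / a) * (1 - x / b) * T q a b (x * q) n := by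
    intro n
    rw [hI n, hcoefdef]
    ring
  rw [tsum_congr e4, tsum_mul_left]

section main
variable {q a b c : ℂ} (hq1 : Complex.abs q < 1) (ha : a ≠ 0) (hb : b ≠ 0)
  (hc : ∀ k : ℕ, c * q ^ k ≠ 1) (hz : Complex.abs (c / (a * b)) < 1)

lemma abs_arg (N : ℕ) :
    Complex.abs ((c * q ^ N) / (a * b)) = Complex.abs (c / (a * b)) * Complex.abs q ^ N := by
  rw [show (c * q ^ N) / (a * b) = (c / (a * b)) * q ^ N by ring, map_mul, map_pow]

include hq1 hz in
lemma hzN (N : ℕ) : Complex.abs ((c * q ^ N) / (a * b)) < 1 := by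
  rw [abs_arg]
  calc Complex.abs (c / (a * b)) * Complex.abs q ^ N ≤ Complex.abs (c / (a * b)) * 1 :=
        mul_le_mul_of_nonneg_left (pow_le_one₀ (Complex.abs.nonneg q) hq1.le)
          (Complex.abs.nonneg _)
    _ < 1 := by rwa [mul_one]

include hc in
lemma hcN (N : ℕ) : ∀ k : ℕ, (c * q ^ N) * q ^ k ≠ 1 :=
  fun k h => hc (N + k) (by rw [← h, pow_add]; ring)

include hq1 ha hb hc hz in
lemma iterate_eq : ∀ N : ℕ,
    (pp c q N * pp (c / (a * b)) q N) * ∑' n, T q a b c n =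
      (pp (c / a) q N * pp (c / b) q N) * ∑' n, T q a b (c * q ^ N) n := by
  intro N
  induction N with
  | zero => simp [pp]
  | succ N ih =>
    have hstep := step hq1 ha hb (hcN hc N) (hzN hq1 hz N)
    rw [show c * q ^ (N + 1) = (c * q ^ N) * q by rw [pow_succ]; ring,
      pp_succ, pp_succ, pp_succ, pp_succ]
    linear_combination ((1 - c * q ^ N) * (1 - c * q ^ N / (a * b))) * ih +
      (pp (c / a) q N * pp (c / b) q N) * hstep

include hq1 ha hb hc hz in
lemma tail_tendsto : Tendsto (fun N => ∑' n, T q a b (c * q ^ N) n) atTop (𝓝 1) := by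
  obtain ⟨δq, hδq0, hδq⟩ := pp_lb hq1 (q_self_ne_one hq1)
  have hq0 : (0:ℝ) ≤ Complex.abs q := Complex.abs.nonneg q
  set s : ℝ := Complex.abs (c / (a * b)) with hs
  have hs0 : 0 ≤ s := Complex.abs.nonneg _
  obtain ⟨K, hK⟩ : ∃ K : ℕ, ∀ N ≥ K, Complex.abs (c * q ^ N) * (1 - Complex.abs q)⁻¹ ≤ 1/2 := by
    have h : Tendsto (fun n : ℕ => Complex.abs c * Complex.abs q ^ n * (1 - Complex.abs q)⁻¹)
        atTop (𝓝 (Complex.abs c * 0 * (1 - Complex.abs q)⁻¹)) :=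
      ((tendsto_pow_atTop_nhds_zero_of_lt_one hq0 hq1).const_mul _).mul_const _
    rw [mul_zero, zero_mul] at h
    obtain ⟨K, hK⟩ := eventually_atTop.1 (h.eventually_le_const (show (0:ℝ) < 1/2 by norm_num))
    exact ⟨K, fun N hN => by simpa [map_mul, map_pow] using hK N hN⟩
  set M : ℝ := Real.exp (Complex.abs a * (1 - Complex.abs q)⁻¹) *
    Real.exp (Complex.abs b * (1 - Complex.abs q)⁻¹) / (δq * (1/2)) with hM
  have hM0 : 0 < M := by positivity
  rw [tendsto_iff_norm_sub_tendsto_zero]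
  apply squeeze_zero' (Eventually.of_forall fun N => norm_nonneg _)
    (g := fun N => (M * s * (1 - s)⁻¹) * Complex.abs q ^ N)
  · filter_upwards [eventually_ge_atTop K] with N hN
    have hδx : ∀ n, (1:ℝ)/2 ≤ Complex.abs (pp (c * q ^ N) q n) :=
      pp_abs_half hq1 (hK N hN)
    have hbd := fun n => T_bound (a := a) (b := b) hq1 hδq0 hδq (by norm_num : (0:ℝ) < 1/2) hδx n
    have hsummable : Summable (fun n => T q a b (c * q ^ N) n) := by
      have := T_summable_mul hq1 hδq0 hδq (by norm_num : (0:ℝ) < 1/2) hδx (hzN hq1 hz N)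
        (fun _ => 1) 1 (fun n => by simp)
      simpa using this
    set sN : ℝ := Complex.abs ((c * q ^ N) / (a * b)) with hsN
    have hsN1 : sN < 1 := hzN hq1 hz N
    have hsN0 : 0 ≤ sN := Complex.abs.nonneg _
    have hsNs : sN = s * Complex.abs q ^ N := abs_arg N
    have h1 : ∑' n, T q a b (c * q ^ N) n = 1 + ∑' n, T q a b (c * q ^ N) (n + 1) := by
      rw [Summable.tsum_eq_zero_add hsummable]
      congr 1
      simp [T, pp]
    rw [h1]
    have hsum2 : Summable (fun n => T q a b (c * q ^ N) (n + 1)) :=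
      (summable_nat_add_iff 1).2 hsummable
    have hsumgeo : Summable (fun n : ℕ => M * sN ^ (n + 1)) := by
      apply Summable.mul_left
      exact (summable_nat_add_iff 1).2 (summable_geometric_of_lt_one hsN0 hsN1)
    have hbd' : ∀ n : ℕ, ‖T q a b (c * q ^ N) (n + 1)‖ ≤ M * sN ^ (n + 1) := by
      intro n
      rw [Complex.norm_eq_abs]
      exact hbd (n + 1)
    have hnorm : Summable (fun n => ‖T q a b (c * q ^ N) (n + 1)‖) :=
      Summable.of_nonneg_of_le (fun n => norm_nonneg _) hbd' hsumgeo
    have hsNle : sN ≤ s := by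
      rw [hsNs]
      nlinarith [pow_le_one₀ hq0 hq1.le (n := N), pow_nonneg hq0 N]
    have h1s : (0:ℝ) < 1 - s := by linarith
    have hinvle : (1 - sN)⁻¹ ≤ (1 - s)⁻¹ := by
      apply inv_anti₀ h1s
      linarith
    calc ‖(1 + ∑' n, T q a b (c * q ^ N) (n + 1)) - 1‖ = ‖∑' n, T q a b (c * q ^ N) (n + 1)‖ := by
          rw [add_sub_cancel_left]
      _ ≤ ∑' n, ‖T q a b (c * q ^ N) (n + 1)‖ := norm_tsum_le_tsum_norm hnorm
      _ ≤ ∑' n, M * sN ^ (n + 1) := Summable.tsum_le_tsum hbd' hnorm hsumgeo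
      _ = M * (sN * (1 - sN)⁻¹) := by
          rw [tsum_mul_left]
          congr 1
          have : ∀ n : ℕ, sN ^ (n + 1) = sN * sN ^ n := fun n => by rw [pow_succ]; ring
          rw [tsum_congr this, tsum_mul_left, tsum_geometric_of_lt_one hsN0 hsN1]
      _ ≤ M * ((s * Complex.abs q ^ N) * (1 - s)⁻¹) := by
          apply mul_le_mul_of_nonneg_left _ hM0.le
          rw [← hsNs]
          exact mul_le_mul le_rfl hinvle (inv_nonneg.2 (by linarith)) hsN0
      _ = (M * s * (1 - s)⁻¹) * Complex.abs q ^ N := by ring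
  · have : Tendsto (fun N : ℕ => (M * s * (1 - s)⁻¹) * Complex.abs q ^ N) atTop
        (𝓝 ((M * s * (1 - s)⁻¹) * 0)) :=
      (tendsto_pow_atTop_nhds_zero_of_lt_one hq0 hq1).const_mul _
    rwa [mul_zero] at this


include hq1 ha hb hc hz in
lemma main_eq : ∑' n, T q a b c n =
    qp (c / a) q * qp (c / b) q / (qp c q * qp (c / (a * b)) q) := by
  set S : ℂ := ∑' n, T q a b c n with hS
  have h1 : Tendsto (fun N => (pp c q N * pp (c / (a * b)) q N) * S) atTop
      (𝓝 ((qp c q * qp (c / (a * b)) q) * S)) :=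
    ((qp_tendsto hq1 c).mul (qp_tendsto hq1 (c / (a * b)))).mul_const S
  have h2 : Tendsto (fun N => (pp c q N * pp (c / (a * b)) q N) * S) atTop
      (𝓝 (qp (c / a) q * qp (c / b) q * 1)) := by
    apply Tendsto.congr (fun N => (iterate_eq hq1 ha hb hc hz N).symm)
    exact ((qp_tendsto hq1 (c / a)).mul (qp_tendsto hq1 (c / b))).mul
      (tail_tendsto hq1 ha hb hc hz)
  have heq := tendsto_nhds_unique h1 h2
  have hqc : qp c q ≠ 0 :=
    qp_ne_zero hq1 fun n => sub_ne_zero.2 fun h => hc n h.symm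
  have hqcab : qp (c / (a * b)) q ≠ 0 := by
    refine qp_ne_zero hq1 fun n => sub_ne_zero.2 fun h => ?_
    have : Complex.abs ((c / (a * b)) * q ^ n) < 1 := by
      rw [map_mul, map_pow]
      calc Complex.abs (c / (a * b)) * Complex.abs q ^ n
          ≤ Complex.abs (c / (a * b)) * 1 :=
            mul_le_mul_of_nonneg_left (pow_le_one₀ (Complex.abs.nonneg q) hq1.le)
              (Complex.abs.nonneg _)
        _ < 1 := by rwa [mul_one]
    rw [← h] at this; simp at this
  rw [eq_div_iff (mul_ne_zero hqc hqcab)]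
  linear_combination heq

end main

end QG

/-- The q-Gauss summation formula. -/
theorem q_gauss_sum (q a b c : ℂ)
    (hq0 : 0 < ‖q‖) (hq1 : ‖q‖ < 1)
    (ha : a ≠ 0) (hb : b ≠ 0)
    (hc : ∀ k : ℕ, c * q ^ k ≠ 1)
    (hz : ‖c / (a * b)‖ < 1) :
    ∑' n : ℕ,
      (∏ k ∈ Finset.range n, (1 - a * q ^ k)) * (∏ k ∈ Finset.range n, (1 - b * q ^ k)) /
        ((∏ k ∈ Finset.range n, (1 - q * q ^ k)) * (∏ k ∈ Finset.range n, (1 - c * q ^ k))) *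
        (c / (a * b)) ^ n =
      qp (c / a) q * qp (c / b) q / (qp c q * qp (c / (a * b)) q) := by
  have h : ∑' n : ℕ, QG.T q a b c n =
      qp (c / a) q * qp (c / b) q / (qp c q * qp (c / (a * b)) q) :=
    QG.main_eq hq1 ha hb hc hz
  exact h
end
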